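/- arXiv:2008.11118 — 2 statements merged into one kernel-verified Lean document; each statement's English description precedes it below -/
import Mathlib

section
/- Let I be a finitely generated ideal of B such that I is generated by its degree of invariance, namely I = (I ∩ A)·B (the ideal of B generated by the invariant elements of I). Then I ∩ A is a finitely generated ideal of A. -/
/-- The subring of `G`-invariant elements of `B`. -/
def fixedSubring (G B : Type*) [Group G] [CommRing B] [MulSemiringAction G B] : Subring B where
  carrier := {b | ∀ g : G, g • b = b}
  mul_mem' := by intro a b ha hb g; rw [smul_mul', ha, hb]
  one_mem' := fun g => smul_one g
  add_mem' := by intro a b ha hb g; rw [smul_add, ha, hb]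
  zero_mem' := fun g => smul_zero g
  neg_mem' := by intro a ha g; rw [smul_neg, ha]

section Reynolds

variable {G B : Type*} [Group G] [Fintype G] [CommRing B] [MulSemiringAction G B]
  [Invertible (Fintype.card G : B)]

/-- The Reynolds (averaging) operator. -/
noncomputable def reynolds (b : B) : B :=
  ⅟(Fintype.card G : B) * ∑ g : G, g • b

lemma smul_natCast' (g : G) (n : ℕ) : g • (n : B) = (n : B) := by
  exact map_natCast (MulSemiringAction.toRingHom G B g) n

lemma smul_invOf_card (g : G) :
    g • (⅟(Fintype.card G : B)) = ⅟(Fintype.card G : B) := by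
  symm
  apply invOf_eq_right_inv
  have h : (Fintype.card G : B) * g • ⅟(Fintype.card G : B)
      = g • ((Fintype.card G : B) * ⅟(Fintype.card G : B)) := by
    rw [smul_mul', smul_natCast']
  rw [h, mul_invOf_self, smul_one]

lemma reynolds_mem_fixed (b : B) : reynolds (G := G) b ∈ fixedSubring G B := by
  intro g
  unfold reynolds
  rw [smul_mul', smul_invOf_card, Finset.smul_sum]
  congr 1
  refine Fintype.sum_bijective (fun h => g * h) (Group.mulLeft_bijective g) _ _ ?_
  intro h
  rw [smul_smul]

lemma reynolds_fixed {b : B} (hb : b ∈ fixedSubring G B) : reynolds (G := G) b = b := by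
  unfold reynolds
  have : ∀ g : G, g • b = b := hb
  simp only [this, Finset.sum_const, Finset.card_univ, nsmul_eq_mul]
  exact invOf_mul_cancel_left _ _

lemma reynolds_mul_fixed (b : B) {a : B} (ha : a ∈ fixedSubring G B) :
    reynolds (G := G) (b * a) = reynolds (G := G) b * a := by
  unfold reynolds
  have : ∀ g : G, g • (b * a) = (g • b) * a := fun g => by rw [smul_mul', ha g]
  simp only [this, ← Finset.sum_mul, mul_assoc]

lemma reynolds_sum {ι : Type*} (s : Finset ι) (f : ι → B) :
    reynolds (G := G) (∑ i ∈ s, f i) = ∑ i ∈ s, reynolds (G := G) (f i) := by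
  unfold reynolds
  simp only [Finset.smul_sum, Finset.mul_sum]
  exact Finset.sum_comm

end Reynolds

/-- If a finitely generated ideal `I` of `B` is generated by its invariant elements,
i.e. `I = (I ∩ A)·B` where `A = B^G`, then `I ∩ A` is a finitely generated ideal of `A`. -/
theorem contraction_fg_of_generated_by_invariants
    {G B : Type*} [Group G] [Fintype G] [CommRing B] [MulSemiringAction G B]
    (hcard : Invertible (Fintype.card G : B))
    (I : Ideal B) (hfg : I.FG)
    (hgen : I = Ideal.map (fixedSubring G B).subtype
      (Ideal.comap (fixedSubring G B).subtype I)) :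
    (Ideal.comap (fixedSubring G B).subtype I).FG := by
  classical
  haveI := hcard
  set A := fixedSubring G B with hA
  set J : Ideal A := Ideal.comap A.subtype I with hJ
  -- Step 1: find a finite set S ⊆ A.subtype '' J generating I.
  obtain ⟨T, hT⟩ := hfg
  have hmem : ∀ t ∈ T, ∃ St : Finset B, ↑St ⊆ A.subtype '' (J : Set A) ∧
      t ∈ Ideal.span (St : Set B) := by
    intro t ht
    have : t ∈ I := hT ▸ Ideal.subset_span ht
    rw [hgen] at this
    rw [Ideal.map, Ideal.span] at this
    exact Submodule.mem_span_finite_of_mem_span this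
  choose Sf hSf1 hSf2 using hmem
  set S : Finset B := T.attach.biUnion (fun t => Sf t.1 t.2) with hS
  have hSsub : (S : Set B) ⊆ A.subtype '' (J : Set A) := by
    intro s hs
    simp only [hS, Finset.coe_biUnion, Set.mem_iUnion] at hs
    obtain ⟨t, ht, hst⟩ := hs
    exact hSf1 t.1 t.2 hst
  have hinvS : ∀ s ∈ S, s ∈ A ∧ s ∈ I := by
    intro s hs
    obtain ⟨a, haJ, rfl⟩ := hSsub hs
    exact ⟨a.2, haJ⟩
  have hspanS : Ideal.span (S : Set B) = I := by
    apply le_antisymm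
    · rw [Ideal.span_le]
      intro s hs
      exact (hinvS s hs).2
    · rw [← hT, Ideal.span_le]
      intro t ht
      refine Ideal.span_mono ?_ (hSf2 t ht)
      intro x hx
      simp only [hS, Finset.coe_biUnion, Set.mem_iUnion]
      exact ⟨⟨t, ht⟩, Finset.mem_attach _ _, hx⟩
  -- Step 2: lift S to a finite set in A
  set T' : Finset A := S.attach.image (fun s => (⟨s.1, (hinvS s.1 s.2).1⟩ : A)) with hT'
  refine ⟨T', le_antisymm ?_ ?_⟩
  · rw [Ideal.span_le]
    intro a ha
    simp only [hT', Finset.coe_image, Set.mem_image] at ha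
    obtain ⟨s, _, rfl⟩ := ha
    show (s.1 : B) ∈ I
    exact (hinvS s.1 s.2).2
  · intro x hx
    have hxI : (x : B) ∈ Ideal.span (S : Set B) := by
      rw [hspanS]; exact hx
    rw [Ideal.span, Submodule.mem_span_finset] at hxI
    obtain ⟨f, -, hf⟩ := hxI
    -- apply the Reynolds operator
    have key : (x : B) = ∑ s ∈ S, reynolds (G := G) (f s) * s := by
      have h1 : (x : B) = reynolds (G := G) (x : B) := (reynolds_fixed x.2).symm
      rw [h1, ← hf, reynolds_sum]
      refine Finset.sum_congr rfl fun s hs => ?_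
      rw [smul_eq_mul, reynolds_mul_fixed _ ((hinvS s hs).1)]
    set y : A := ∑ s ∈ S.attach,
      (⟨reynolds (G := G) (f s.1), reynolds_mem_fixed _⟩ : A) *
        (⟨s.1, (hinvS s.1 s.2).1⟩ : A) with hy
    have hxy : x = y := by
      apply Subtype.ext
      rw [hy]
      push_cast
      rw [key, ← Finset.sum_attach S (fun s => reynolds (G := G) (f s) * s)]
    rw [hxy, hy]
    refine Ideal.sum_mem _ fun s _ => Ideal.mul_mem_left _ _ ?_
    apply Ideal.subset_span
    simp only [hT', Finset.coe_image, Set.mem_image]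
    exact ⟨s, by simp, rfl⟩
end

section
/- Let f₁, …, fₙ be elements of A. If the sequence f₁, …, fₙ, regarded as elements of B, is weakly regular on B (that is, for each i, the image of f_i is a nonzerodivisor on B/(f₁, …, f_{i−1})B), then the sequence f₁, …, fₙ is weakly regular on A (for each i, f_i is a nonzerodivisor on A/(f₁, …, f_{i−1})A). -/
open RingTheory.Sequence

section Aux

variable {G B : Type*} [Group G] [Fintype G] [CommRing B] [MulSemiringAction G B]

omit [Fintype G] in
/-- Normalizing the coercion map on lists. -/
lemma coeMap_eq (L : List (fixedSubring G B)) :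
    (L.map (fun a => (a : B))) = L.map (fun a => a.val) := by
  simp [Function.comp]

/-- The "norm" (sum over the group) operator. -/
noncomputable def reynoldsN (G : Type*) [Group G] [Fintype G] {B : Type*} [CommRing B]
    [MulSemiringAction G B] (b : B) : B := ∑ g : G, g • b

lemma reynoldsN_invariant (b : B) (g : G) : g • reynoldsN G b = reynoldsN G b := by
  unfold reynoldsN
  rw [Finset.smul_sum]
  exact Fintype.sum_equiv (Equiv.mulLeft g) _ _ (fun h => (mul_smul g h b).symm)

lemma reynoldsN_mem (b : B) : reynoldsN G b ∈ fixedSubring G B :=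
  fun g => reynoldsN_invariant b g

lemma reynoldsN_fixed (a : fixedSubring G B) :
    reynoldsN G (a : B) = (Fintype.card G : B) * (a : B) := by
  unfold reynoldsN
  calc ∑ g : G, g • (a : B) = ∑ _g : G, (a : B) :=
        Finset.sum_congr rfl fun g _ => a.2 g
    _ = (Fintype.card G : B) * (a : B) := by
        rw [Finset.sum_const, Finset.card_univ, nsmul_eq_mul]

lemma invOf_invariant (hcard : Invertible (Fintype.card G : B)) (g : G) :
    g • (⅟(Fintype.card G : B)) = ⅟(Fintype.card G : B) := by
  have h2 : g • (Fintype.card G : B) = (Fintype.card G : B) :=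
    map_natCast (MulSemiringAction.toRingHom G B g) _
  have key : (Fintype.card G : B) * (g • ⅟(Fintype.card G : B)) = 1 := by
    calc (Fintype.card G : B) * (g • ⅟(Fintype.card G : B))
        = (g • (Fintype.card G : B)) * (g • ⅟(Fintype.card G : B)) := by rw [h2]
      _ = g • ((Fintype.card G : B) * ⅟(Fintype.card G : B)) := (smul_mul' _ _ _).symm
      _ = 1 := by rw [mul_invOf_self, smul_one]
  exact (invOf_eq_right_inv key).symm

/-- Invertibility of the group order descends to the invariant subring. -/
noncomputable def invertibleCardFixed (hcard : Invertible (Fintype.card G : B)) :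
    Invertible (Fintype.card G : fixedSubring G B) where
  invOf := ⟨⅟(Fintype.card G : B), invOf_invariant hcard⟩
  invOf_mul_self := by
    ext
    push_cast
    simp
  mul_invOf_self := by
    ext
    push_cast
    simp

/-- Key lemma: Reynolds-operator descent of ideal membership. -/
lemma mem_ofList_of_coe_mem (hcard : Invertible (Fintype.card G : B))
    (L : List (fixedSubring G B)) (x : fixedSubring G B)
    (hx : (x : B) ∈ Ideal.ofList (L.map (fun a => a.val))) :
    x ∈ Ideal.ofList L := by
  rw [Ideal.ofList, Ideal.span] at hx
  obtain ⟨n, f, g, hsum⟩ := Submodule.mem_span_set'.mp hx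
  -- choose invariant representatives of the generators
  have hg : ∀ i : Fin n, ∃ a : fixedSubring G B, a ∈ L ∧ (a : B) = (g i : B) := by
    intro i
    obtain ⟨a, haL, ha⟩ := List.mem_map.mp (g i).2
    exact ⟨a, haL, ha⟩
  choose a haL ha using hg
  -- apply the norm operator to the sum
  have hNsum : reynoldsN G (x : B) = ∑ i, (a i : B) * reynoldsN G (f i) := by
    rw [← hsum]
    unfold reynoldsN
    simp only [Finset.smul_sum]
    rw [Finset.sum_comm]
    refine Finset.sum_congr rfl fun i _ => ?_
    rw [Finset.mul_sum]
    refine Finset.sum_congr rfl fun h _ => ?_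
    rw [smul_eq_mul, ← ha i, mul_comm, smul_mul', (a i).2 h]
  -- interpret in the subring
  have key : (Fintype.card G : fixedSubring G B) * x
      = ∑ i, a i * ⟨reynoldsN G (f i), reynoldsN_mem (f i)⟩ := by
    ext
    push_cast
    rw [← reynoldsN_fixed x]
    exact hNsum
  have hmem : (Fintype.card G : fixedSubring G B) * x ∈ Ideal.ofList L := by
    rw [key]
    refine Ideal.sum_mem _ fun i _ => ?_
    exact Ideal.mul_mem_right _ _ (Ideal.subset_span (haL i))
  have := invertibleCardFixed hcard
  have hx' : x = ⅟(Fintype.card G : fixedSubring G B)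
      * ((Fintype.card G : fixedSubring G B) * x) := (invOf_mul_cancel_left _ _).symm
  rw [hx']
  exact Ideal.mul_mem_left _ _ hmem

/-- Regularity modulo an ideal, stated without submodule quotients. -/
lemma isSMulRegular_quotient_iff {R : Type*} [CommRing R] (I : Ideal R) (r : R) :
    IsSMulRegular (R ⧸ (I • ⊤ : Submodule R R)) r ↔ ∀ x : R, r * x ∈ I → x ∈ I := by
  set p : Submodule R R := I • ⊤ with hp
  have hI : ∀ x : R, x ∈ p ↔ x ∈ I := by
    intro x
    rw [hp, smul_eq_mul, Ideal.mul_top]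
  constructor
  · intro h x hrx
    have h1 : p.mkQ (r • x) = (0 : R ⧸ p) := by
      rw [Submodule.mkQ_apply, Submodule.Quotient.mk_eq_zero]
      exact (hI _).mpr (by rwa [smul_eq_mul])
    have h2 : r • p.mkQ x = r • (0 : R ⧸ p) := by
      rw [← map_smul, h1, smul_zero]
    have h3 : p.mkQ x = 0 := h h2
    rw [Submodule.mkQ_apply, Submodule.Quotient.mk_eq_zero] at h3
    exact (hI x).mp h3
  · intro h x y hxy
    obtain ⟨u, rfl⟩ := p.mkQ_surjective x
    obtain ⟨v, rfl⟩ := p.mkQ_surjective y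
    have hxy' : p.mkQ (r • u) = p.mkQ (r • v) := by
      rw [map_smul, map_smul]
      exact hxy
    have hsub : r • u - r • v ∈ p := by
      rw [← Submodule.Quotient.eq, ← Submodule.mkQ_apply, ← Submodule.mkQ_apply]
      exact hxy'
    have hmul : r * (u - v) ∈ I := by
      rw [mul_sub]
      exact (hI _).mp (by simpa [smul_eq_mul] using hsub)
    have huv : u - v ∈ I := h _ hmul
    rw [← sub_eq_zero, ← map_sub, Submodule.mkQ_apply, Submodule.Quotient.mk_eq_zero]
    exact (hI _).mpr huv

end Aux

/-- A sequence of invariant elements that is weakly regular on `B` is weakly regular on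
the invariant ring `A = B^G`. -/
theorem isWeaklyRegular_fixed_of_isWeaklyRegular
    {G B : Type*} [Group G] [Fintype G] [CommRing B] [MulSemiringAction G B]
    (hcard : Invertible (Fintype.card G : B))
    (fs : List (fixedSubring G B))
    (hreg : IsWeaklyRegular B (fs.map (fun a => (a : B)))) :
    IsWeaklyRegular (fixedSubring G B) fs := by
  rw [coeMap_eq] at hreg
  constructor
  intro i hi
  have hi' : i < (fs.map (fun a => a.val)).length := by simpa using hi
  have hB := hreg.regular_mod_prev i hi'
  rw [isSMulRegular_quotient_iff] at hB
  rw [isSMulRegular_quotient_iff]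
  intro x hx
  have hmap : (fs.map (fun a => a.val)).take i = (fs.take i).map (fun a => a.val) :=
    List.map_take.symm
  have hget : (fs.map (fun a => a.val))[i] = (fs[i] : B) := by
    simp only [List.getElem_map]
  -- push `hx` to `B`
  have hxB : (fs[i] : B) * (x : B) ∈
      Ideal.ofList ((fs.take i).map (fun a => a.val)) := by
    have h1 := Ideal.mem_map_of_mem (fixedSubring G B).subtype hx
    rw [Ideal.map_ofList] at h1
    have h2 : (fs.take i).map (⇑(fixedSubring G B).subtype)
        = (fs.take i).map (fun a => a.val) := rfl
    rw [h2] at h1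
    exact h1
  have hxB' : (x : B) ∈ Ideal.ofList ((fs.take i).map (fun a => a.val)) := by
    have h3 := hB (x : B) (by rw [hmap, hget]; exact hxB)
    rwa [hmap] at h3
  exact mem_ofList_of_coe_mem hcard _ _ hxB'
end
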